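/- Suppose real numbers λ, μ₁, μ₂, μ₃, μ₄ ≥ 0 satisfy: μ₁ = λ³; μ₂ + μ₁ = λ(1 − λ²); λ² < 1; μ₃ = μ₂²/(1 − λ²); μ₄ = λ⁴; and μ₃ + μ₄ = (1 − λ²)²·λ². Then λ = 0. -/
import Mathlib

/-- The algebraic core of the non-MS-measurability proof: the system of equations
satisfied by the putative measures forces the measure `λ` of an edge to be `0`. -/
theorem measure_equations_force_zero (lam μ₁ μ₂ μ₃ μ₄ : ℝ)
    (h0 : 0 ≤ lam) (h1 : 0 ≤ μ₁) (h2 : 0 ≤ μ₂) (h3 : 0 ≤ μ₃) (h4 : 0 ≤ μ₄)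
    (e1 : μ₁ = lam ^ 3)
    (e2 : μ₂ + μ₁ = lam * (1 - lam ^ 2))
    (hlt : lam ^ 2 < 1)
    (e3 : μ₃ = μ₂ ^ 2 / (1 - lam ^ 2))
    (e4 : μ₄ = lam ^ 4)
    (e5 : μ₃ + μ₄ = (1 - lam ^ 2) ^ 2 * lam ^ 2) :
    lam = 0 := by
  have hpos : (0:ℝ) < 1 - lam ^ 2 := by linarith
  have hμ₂ : μ₂ = lam - 2 * lam ^ 3 := by nlinarith [e2, e1]
  have key : μ₂ ^ 2 = μ₃ * (1 - lam ^ 2) := by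
    rw [e3]; field_simp
  have h8 : lam ^ 8 = 0 := by nlinarith [key, e5, e4, hμ₂, sq_nonneg lam]
  have := pow_eq_zero_iff (n := 8) (by norm_num) |>.mp h8
  exact this
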